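/- Consider two modalities v and u with Hilbert spaces H^(v), H^(u) and, for a fixed class m, probability measures ν_m^(v), ν_m^(u) with bounded supports, independent across modalities; define η_{m,δ} = min over the two modalities of inf over the support of the measure of the ball B_δ(·). Suppose the training set contains N_m samples of class m with observations available in both modalities (i.i.d. within each modality), and the embedding {y_i^(v)}, {y_i^(u)} ⊂ ℝ^d satisfies: (P1) ‖y_i^(v) − y_i^(u)‖ ≤ η for all training samples x_i; (P2) ‖y_i^(v) − y_j^(v)‖ ≤ R_δ if ‖x_i^(v) − x_j^(v)‖ ≤ 2δ and likewise in modality u, whenever x_i, x_j have the same class; (P3) ‖y_i^(v) − y_j^(u)‖ > γ whenever x_i, x_j have different classes. Assume the interpolators f^(v): H^(v) → ℝ^d and f^(u): H^(u) → ℝ^d are Lipschitz with constant L, map training observations to their embeddings, and 6Lδ + 2√d·ε + 2R_δ + 2η ≤ γ holds for some ε > 0, δ > 0. If N_m > Q/η_{m,δ} for some Q ≥ 1, then for a query sample x^(v) ∼ ν_m^(v) of class m (independent of the training samples), with probability at least 1 − exp(−2(N_m·η_{m,δ} − Q)²/N_m) − 2d·exp(−Q·ε²/(2L²δ²)) − (1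 − η_{m,δ})^Q, the retrieval algorithm that returns the K training samples of modality u whose embeddings are nearest to f^(v)(x^(v)) achieves precision P = 1 if K ≤ Q and P ≥ Q/K if K > Q, and recall R = K/N_m if K ≤ Q and R ≥ Q/N_m if K > Q. -/

import Mathlib

open MeasureTheory ProbabilityTheory Metric


open Real in
lemma crb_bernoulli_mgf_aux {p : ℝ} (hp0 : 0 ≤ p) (hp1 : p ≤ 1) {t : ℝ} (ht : 0 ≤ t) :
    1 - p + p * exp (-t) ≤ exp (-(t * p) + t ^ 2 / 8) := by
  set D : ℝ → ℝ := fun s => 1 - p + p * exp (-s) with hDdef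
  have hD : ∀ s, 0 < D s := by
    intro s
    have h1 : 0 < exp (-s) := exp_pos _
    rcases eq_or_lt_of_le hp0 with h | h
    · simp [hDdef, ← h]
    · have h2 : 0 < p * exp (-s) := mul_pos h h1
      simp only [hDdef]; nlinarith
  have hDd : ∀ s, HasDerivAt D (-(p * exp (-s))) s := by
    intro s
    have h1 : HasDerivAt (fun s : ℝ => -s) (-1) s := (hasDerivAt_id s).neg
    have h2 : HasDerivAt (fun s : ℝ => exp (-s)) (exp (-s) * -1) s :=
      (Real.hasDerivAt_exp (-s)).comp s h1
    have h3 := (h2.const_mul p).const_add (1 - p)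
    exact h3.congr_deriv (by ring)
  set ψ : ℝ → ℝ := fun s => p - p * exp (-s) / D s - s / 4 with hψdef
  have hNd : ∀ s, HasDerivAt (fun s : ℝ => p * exp (-s)) (-(p * exp (-s))) s := by
    intro s
    have h1 : HasDerivAt (fun s : ℝ => -s) (-1) s := (hasDerivAt_id s).neg
    have h2 : HasDerivAt (fun s : ℝ => exp (-s)) (exp (-s) * -1) s :=
      (Real.hasDerivAt_exp (-s)).comp s h1
    exact (h2.const_mul p).congr_deriv (by ring)
  have hψd : ∀ s, HasDerivAt ψ
      (-((-(p * exp (-s)) * D s - p * exp (-s) * -(p * exp (-s))) / (D s) ^ 2) - 1 / 4) s := by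
    intro s
    have hdiv := (hNd s).div (hDd s) (hD s).ne'
    have h4 : HasDerivAt (fun s : ℝ => s / 4) (1 / 4) s := by
      simpa using (hasDerivAt_id s).div_const 4
    exact ((hasDerivAt_const s p).sub hdiv).sub h4 |>.congr_deriv (by ring)
  have hψ'le : ∀ s,
      (-((-(p * exp (-s)) * D s - p * exp (-s) * -(p * exp (-s))) / (D s) ^ 2) - 1 / 4) ≤ 0 := by
    intro s
    have hE0 : 0 ≤ p * exp (-s) := mul_nonneg hp0 (exp_pos _).le
    have hED : p * exp (-s) ≤ D s := by
      simp only [hDdef]; nlinarith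
    have hDs := hD s
    have key : (p * exp (-s) * D s - (p * exp (-s)) ^ 2) / (D s) ^ 2 ≤ 1 / 4 := by
      rw [div_le_iff₀ (by positivity)]
      generalize hA : D s = A at hED hDs ⊢
      generalize hEe : p * exp (-s) = E at hE0 hED ⊢
      nlinarith [sq_nonneg (A - 2 * E)]
    have : -((-(p * exp (-s)) * D s - p * exp (-s) * -(p * exp (-s))) / (D s) ^ 2)
        = (p * exp (-s) * D s - (p * exp (-s)) ^ 2) / (D s) ^ 2 := by ring
    rw [this]; linarith
  have hψanti : Antitone ψ := antitone_of_hasDerivAt_nonpos hψd hψ'le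
  have hψ0 : ψ 0 = 0 := by
    simp only [hψdef, hDdef, Real.exp_zero, neg_zero, mul_one]
    have : 1 - p + p = 1 := by ring
    rw [this]; ring
  set φ : ℝ → ℝ := fun s => Real.log (D s) + s * p - s ^ 2 / 8 with hφdef
  have hφd : ∀ s, HasDerivAt φ (ψ s) s := by
    intro s
    have hlog : HasDerivAt (fun s => Real.log (D s)) ((D s)⁻¹ * -(p * exp (-s))) s :=
      (Real.hasDerivAt_log (hD s).ne').comp s (hDd s)
    have hmul : HasDerivAt (fun s : ℝ => s * p) p s := by simpa using (hasDerivAt_id s).mul_const p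
    have hsq : HasDerivAt (fun s : ℝ => s ^ 2 / 8) (2 * s / 8) s := by
      simpa using (hasDerivAt_pow 2 s).div_const 8
    refine ((hlog.add hmul).sub hsq).congr_deriv ?_
    simp only [hψdef]
    field_simp
    ring
  have hψnonpos : ∀ s ∈ interior (Set.Ici (0 : ℝ)), ψ s ≤ 0 := by
    intro s hs
    rw [interior_Ici] at hs
    have : ψ s ≤ ψ 0 := hψanti (le_of_lt hs)
    linarith [hψ0 ▸ this]
  have hφanti : AntitoneOn φ (Set.Ici 0) := by
    refine antitoneOn_of_hasDerivWithinAt_nonpos (convex_Ici 0) ?_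
      (fun x _ => (hφd x).hasDerivWithinAt) hψnonpos
    exact (Differentiable.continuous (fun s => (hφd s).differentiableAt)).continuousOn
  have hφt : φ t ≤ φ 0 := hφanti Set.self_mem_Ici (Set.mem_Ici.mpr ht) ht
  have hφ0 : φ 0 = 0 := by
    simp only [hφdef, hDdef, Real.exp_zero, neg_zero, mul_one]
    have : 1 - p + p = 1 := by ring
    rw [this, Real.log_one]; ring
  have hlogle : Real.log (D t) ≤ -(t * p) + t ^ 2 / 8 := by
    have : Real.log (D t) + t * p - t ^ 2 / 8 ≤ 0 := by rw [← hφ0]; exact hφt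
    linarith
  calc D t = exp (Real.log (D t)) := (Real.exp_log (hD t)).symm
    _ ≤ exp (-(t * p) + t ^ 2 / 8) := exp_le_exp.mpr hlogle

open scoped ENNReal

lemma crb_pi_eval_preimage {κ : Type*} [Fintype κ] {α : Type*} [MeasurableSpace α]
    (μ : Measure α) [IsProbabilityMeasure μ] (i : κ) (s : Set α) :
    Measure.pi (fun _ : κ => μ) ((fun z : κ → α => z i) ⁻¹' s) = μ s := by
  classical
  have h1 : ((fun z : κ → α => z i) ⁻¹' s)
      = Set.univ.pi (fun j => if j = i then s else Set.univ) := by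
    ext z
    simp only [Set.mem_preimage, Set.mem_pi, Set.mem_univ, true_imp_iff]
    constructor
    · intro h j
      split_ifs with hj
      · rwa [hj]
      · trivial
    · intro h
      have := h i
      rwa [if_pos rfl] at this
  rw [h1, Measure.pi_pi]
  have h2 : ∀ j : κ, μ (if j = i then s else Set.univ) = if j = i then μ s else 1 := by
    intro j; split_ifs <;> simp
  rw [Finset.prod_congr rfl (fun j _ => h2 j), Finset.prod_ite_eq' Finset.univ i (fun _ => μ s)]
  simp

lemma crb_iIndepFun_pi_eval {κ : Type*} [Fintype κ] {α : Type*} [MeasurableSpace α]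
    (μ : Measure α) [IsProbabilityMeasure μ] :
    iIndepFun
      (fun i (z : κ → α) => z i) (Measure.pi fun _ : κ => μ) := by
  classical
  rw [iIndepFun_iff_measure_inter_preimage_eq_mul]
  intro S sets hsets
  have h1 : (⋂ i ∈ S, (fun z : κ → α => z i) ⁻¹' sets i)
      = Set.univ.pi (fun i => if i ∈ S then sets i else Set.univ) := by
    ext z
    simp only [Set.mem_iInter, Set.mem_preimage, Set.mem_pi, Set.mem_univ, true_imp_iff]
    constructor
    · intro h i
      split_ifs with hi
      · exact h i hi
      · trivial
    · intro h i hi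
      have := h i
      rwa [if_pos hi] at this
  rw [h1, Measure.pi_pi]
  have h2 : ∀ i : κ, μ (if i ∈ S then sets i else Set.univ)
      = if i ∈ S then μ (sets i) else 1 := by
    intro i; split_ifs <;> simp
  rw [Finset.prod_congr rfl (fun i _ => h2 i), Finset.prod_ite_mem Finset.univ S (fun i => μ (sets i))]
  rw [Finset.univ_inter]
  exact Finset.prod_congr rfl fun i hi => (crb_pi_eval_preimage μ i (sets i)).symm

lemma crb_hoeffding_pi {α : Type*} [MeasurableSpace α] (μ : Measure α) [IsProbabilityMeasure μ]
    {κ : Type*} [Fintype κ] (B : Set α) (hB : MeasurableSet B)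
    {η' q : ℝ} (hη' : η' ≤ (μ B).toReal) (hq : q < (Fintype.card κ : ℝ) * η') :
    Measure.pi (fun _ : κ => μ)
        {z : κ → α | ∑ i : κ, B.indicator (fun _ => (1 : ℝ)) (z i) ≤ q}
      ≤ ENNReal.ofReal
          (Real.exp (-(2 * ((Fintype.card κ : ℝ) * η' - q) ^ 2 / (Fintype.card κ : ℝ)))) := by
  classical
  set n := Fintype.card κ with hn
  rcases Nat.eq_zero_or_pos n with hn0 | hnpos
  · haveI : IsEmpty κ := Fintype.card_eq_zero_iff.mp hn0
    have hq0 : q < 0 := by simpa [hn0] using hq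
    have hempty : {z : κ → α | ∑ i : κ, B.indicator (fun _ => (1 : ℝ)) (z i) ≤ q} = ∅ := by
      ext z
      simp only [Set.mem_setOf_eq, Set.mem_empty_iff_false, iff_false, not_le]
      rw [Finset.sum_of_isEmpty]
      exact hq0
    rw [hempty]
    simp
  · have hnR : (0 : ℝ) < n := by exact_mod_cast hnpos
    set p := (μ B).toReal with hp
    have hp0 : 0 ≤ p := ENNReal.toReal_nonneg
    have hp1 : p ≤ 1 := by
      have h := prob_le_one (μ := μ) (s := B)
      calc p ≤ (1 : ℝ≥0∞).toReal := ENNReal.toReal_mono (by norm_num) h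
        _ = 1 := by simp
    set s₀ : ℝ := n * η' - q with hs₀def
    have hs₀ : 0 < s₀ := by rw [hs₀def]; linarith
    set t : ℝ := 4 * s₀ / n with htdef
    have ht : 0 < t := by positivity
    set π := Measure.pi (fun _ : κ => μ) with hπ
    haveI : IsProbabilityMeasure π := by rw [hπ]; infer_instance
    set Y : κ → (κ → α) → ℝ := fun i z => p - B.indicator (fun _ => (1 : ℝ)) (z i) with hY
    have hindmeas : Measurable (B.indicator (fun _ : α => (1 : ℝ))) :=
      measurable_const.indicator hB
    have hYmeas : ∀ i, Measurable (Y i) := fun i =>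
      measurable_const.sub (hindmeas.comp (measurable_pi_apply i))
    have hYindep : iIndepFun Y π := by
      have := (crb_iIndepFun_pi_eval (κ := κ) μ).comp
        (fun _ (a : α) => p - B.indicator (fun _ => (1 : ℝ)) a)
        (fun _ => measurable_const.sub hindmeas)
      exact this
    have hrep : ∀ i, (fun z : κ → α => Real.exp (t * Y i z))
        = fun z => Real.exp (t * p)
            + ((fun z : κ → α => z i) ⁻¹' B).indicator
                (fun _ => Real.exp (t * (p - 1)) - Real.exp (t * p)) z := by
      intro i
      funext z
      by_cases h : z i ∈ B
      · rw [Set.indicator_of_mem (show z ∈ ((fun z : κ → α => z i) ⁻¹' B) from h)]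
        simp only [hY, Set.indicator_of_mem h]
        ring
      · rw [Set.indicator_of_notMem (show z ∉ ((fun z : κ → α => z i) ⁻¹' B) from h)]
        simp only [hY, Set.indicator_of_notMem h]
        ring
    have hpre : ∀ i, MeasurableSet ((fun z : κ → α => z i) ⁻¹' B) :=
      fun i => hB.preimage (measurable_pi_apply i)
    have hint : ∀ i, Integrable (fun z => Real.exp (t * Y i z)) π := by
      intro i
      rw [hrep i]
      exact (integrable_const _).add ((integrable_const _).indicator (hpre i))
    have hmgf_eq : ∀ i, mgf (Y i) π t
        = Real.exp (t * p) + p * (Real.exp (t * (p - 1)) - Real.exp (t * p)) := by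
      intro i
      unfold mgf
      rw [hrep i]
      rw [integral_add (integrable_const _) ((integrable_const _).indicator (hpre i))]
      rw [integral_const, integral_indicator_const _ (hpre i)]
      rw [measureReal_def, measureReal_def, crb_pi_eval_preimage μ i B]
      rw [← hp]
      simp [measure_univ]
    have hmgf_le : ∀ i, mgf (Y i) π t ≤ Real.exp (t ^ 2 / 8) := by
      intro i
      rw [hmgf_eq i]
      have h1 : Real.exp (t * (p - 1)) = Real.exp (t * p) * Real.exp (-t) := by
        rw [← Real.exp_add]; ring_nf
      have hb := crb_bernoulli_mgf_aux hp0 hp1 ht.le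
      have h2 : Real.exp (t * p) * Real.exp (-(t * p) + t ^ 2 / 8) = Real.exp (t ^ 2 / 8) := by
        rw [← Real.exp_add]; ring_nf
      calc Real.exp (t * p) + p * (Real.exp (t * (p - 1)) - Real.exp (t * p))
          = Real.exp (t * p) * (1 - p + p * Real.exp (-t)) := by rw [h1]; ring
        _ ≤ Real.exp (t * p) * Real.exp (-(t * p) + t ^ 2 / 8) :=
            mul_le_mul_of_nonneg_left hb (Real.exp_pos _).le
        _ = Real.exp (t ^ 2 / 8) := h2
    have hintS : Integrable (fun z => Real.exp (t * (∑ i, Y i) z)) π :=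
      iIndepFun.integrable_exp_mul_sum hYindep hYmeas (fun i _ => hint i)
    have hchern := measure_ge_le_exp_mul_mgf (μ := π) (X := ∑ i, Y i) s₀ ht.le hintS
    have hprod : mgf (∑ i, Y i) π t ≤ Real.exp (t ^ 2 / 8) ^ n := by
      rw [hYindep.mgf_sum hYmeas Finset.univ]
      calc ∏ i, mgf (Y i) π t ≤ ∏ _i : κ, Real.exp (t ^ 2 / 8) :=
            Finset.prod_le_prod (fun i _ => mgf_nonneg) (fun i _ => hmgf_le i)
        _ = Real.exp (t ^ 2 / 8) ^ n := by rw [Finset.prod_const, Finset.card_univ]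
    have hfinal : Real.exp (-t * s₀) * Real.exp (t ^ 2 / 8) ^ n
        = Real.exp (-(2 * s₀ ^ 2 / n)) := by
      rw [← Real.exp_nat_mul, ← Real.exp_add]
      congr 1
      rw [htdef]
      field_simp
      ring
    have hsub : {z : κ → α | ∑ i : κ, B.indicator (fun _ => (1 : ℝ)) (z i) ≤ q}
        ⊆ {z : κ → α | s₀ ≤ (∑ i, Y i) z} := by
      intro z hz
      simp only [Set.mem_setOf_eq] at hz ⊢
      have hsum : (∑ i, Y i) z = n * p - ∑ i : κ, B.indicator (fun _ => (1 : ℝ)) (z i) := by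
        rw [Finset.sum_apply]
        simp only [hY]
        rw [Finset.sum_sub_distrib, Finset.sum_const, Finset.card_univ, ← hn, nsmul_eq_mul]
      rw [hsum]
      have hnp : (n : ℝ) * η' ≤ n * p := mul_le_mul_of_nonneg_left hη' (le_of_lt hnR)
      rw [hs₀def]
      linarith
    calc π {z : κ → α | ∑ i : κ, B.indicator (fun _ => (1 : ℝ)) (z i) ≤ q}
        ≤ π {z : κ → α | s₀ ≤ (∑ i, Y i) z} := measure_mono hsub
      _ = ENNReal.ofReal ((π {z : κ → α | s₀ ≤ (∑ i, Y i) z}).toReal) :=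
          (ENNReal.ofReal_toReal (measure_ne_top _ _)).symm
      _ ≤ ENNReal.ofReal (Real.exp (-t * s₀) * mgf (∑ i, Y i) π t) :=
          ENNReal.ofReal_le_ofReal hchern
      _ ≤ ENNReal.ofReal (Real.exp (-t * s₀) * Real.exp (t ^ 2 / 8) ^ n) :=
          ENNReal.ofReal_le_ofReal (mul_le_mul_of_nonneg_left hprod (Real.exp_pos _).le)
      _ = ENNReal.ofReal (Real.exp (-(2 * s₀ ^ 2 / n))) := by rw [hfinal]
      _ = ENNReal.ofReal (Real.exp (-(2 * ((n : ℝ) * η' - q) ^ 2 / (n : ℝ)))) := by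
          rw [hs₀def]


set_option maxHeartbeats 2000000

/-- Theorem 2 of the paper: cross-modal retrieval with a supervised
embedding. Under cross-modal alignment (P1), within-class compactness (P2),
between-class separation (P3), Lipschitz regularity of the interpolators, the margin
condition `6Lδ + 2√d·ε + 2R_δ + 2η ≤ γ`, and `N_m > Q/η_{m,δ}`, for a query sample of
class `m` observed in modality `v`, with probability at least
`1 − exp(−2(N_m η_{m,δ} − Q)²/N_m) − 2d exp(−Qε²/(2L²δ²)) − (1 − η_{m,δ})^Q`, any set
of `K` training samples of modality `u` whose embeddings are nearest to the query
embedding achieves precision `P = 1` and recall `R = K/N_m` if `K ≤ Q`, and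
`P ≥ Q/K` and `R ≥ Q/N_m` if `K > Q`. -/
theorem crossmodal_retrieval_bound
    {Ω : Type*} [MeasurableSpace Ω] (P : Measure Ω) [IsProbabilityMeasure P]
    -- the two modalities `v` and `u`, each with its own Hilbert space
    (H : Fin 2 → Type*) [∀ w, NormedAddCommGroup (H w)]
    [∀ w, InnerProductSpace ℝ (H w)] [∀ w, MeasurableSpace (H w)]
    [∀ w, BorelSpace (H w)]
    (v u : Fin 2) (hvu : v ≠ u)
    -- the classes, with class-conditional probability measures in each modality
    {Λ : Type*} [DecidableEq Λ] (m : Λ)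
    (ν : Λ → (w : Fin 2) → Measure (H w))
    (hν : ∀ l w, IsProbabilityMeasure (ν l w))
    -- the measures have bounded supports
    (S : Λ → (w : Fin 2) → Set (H w))
    (hSbdd : ∀ l w, Bornology.IsBounded (S l w))
    (hSsupp : ∀ l w, ν l w (S l w)ᶜ = 0)
    -- `η_{m,δ}`: minimum over the two modalities of the infimum over the support of
    -- class `m` of the measure of the `δ`-ball
    {d : ℕ} (δ ε η γ Rδ L ηmδ : ℝ)
    (hδ : 0 < δ) (hε : 0 < ε) (hL : 0 < L)
    (hηmδ : ηmδ = ⨅ w : Fin 2, ⨅ x : S m w, ((ν m w) (ball (x : H w) δ)).toReal)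
    -- the training samples, with their class labels; exactly `N_m` of them are of
    -- class `m`, and all observations are available in both modalities
    {ι : Type*} [Fintype ι] [DecidableEq ι] (c : ι → Λ)
    (Nm : ℕ) (hNm : (Finset.univ.filter (fun i => c i = m)).card = Nm)
    (X : (w : Fin 2) → ι → Ω → H w)
    (hXmeas : ∀ w i, Measurable (X w i))
    (hXdist : ∀ w i, Measure.map (X w i) P = ν (c i) w)
    -- the query sample of class `m` observed in modality `v` (with its hypothetical
    -- observation in modality `u`), drawn independently of the training samples
    (x : (w : Fin 2) → Ω → H w)
    (hxmeas : ∀ w, Measurable (x w))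
    (hxdist : ∀ w, Measure.map (x w) P = ν m w)
    -- all observations are mutually independent
    (hindep : iIndepFun
      (m := fun p : Fin 2 × Option ι => (inferInstance : MeasurableSpace (H p.1)))
      (fun p : Fin 2 × Option ι => p.2.elim (x p.1) (fun i => X p.1 i)) P)
    -- the interpolators, Lipschitz with constant `L`, defining the embedding
    (f : (w : Fin 2) → H w → EuclideanSpace ℝ (Fin d))
    (hLip : ∀ w (a b : H w), ‖f w a - f w b‖ ≤ L * ‖a - b‖)
    -- (P1) cross-modal alignment of the training embeddings
    (hP1 : ∀ ω i, ‖f v (X v i ω) - f u (X u i ω)‖ ≤ η)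
    -- (P2) within-class compactness, in each of the two modalities
    (hP2 : ∀ ω (w : Fin 2) i j, c i = c j → ‖X w i ω - X w j ω‖ ≤ 2 * δ →
      ‖f w (X w i ω) - f w (X w j ω)‖ ≤ Rδ)
    -- (P3) between-class separation
    (hP3 : ∀ ω i j, c i ≠ c j → γ < ‖f v (X v i ω) - f u (X u j ω)‖)
    -- the margin condition
    (hmargin : 6 * L * δ + 2 * Real.sqrt d * ε + 2 * Rδ + 2 * η ≤ γ)
    -- enough training samples
    (Q : ℕ) (hQ : 1 ≤ Q) (hNQ : (Q : ℝ) / ηmδ < Nm)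
    -- the number of retrieved items
    (K : ℕ) (hK : 1 ≤ K) :
    ENNReal.ofReal
        (1 - Real.exp (-(2 * ((Nm : ℝ) * ηmδ - Q) ^ 2 / Nm))
           - 2 * d * Real.exp (-(Q * ε ^ 2 / (2 * L ^ 2 * δ ^ 2)))
           - (1 - ηmδ) ^ Q)
      ≤ P {ω | ∀ A : Finset ι, A.card = K →
            -- `A` consists of `K` training samples of modality `u` whose embeddings
            -- are nearest to the embedding of the query
            (∀ i ∈ A, ∀ j ∉ A,
              ‖f u (X u i ω) - f v (x v ω)‖ ≤ ‖f u (X u j ω) - f v (x v ω)‖) →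
            -- precision `P = TP/(TP+FP)` and recall `R = TP/(TP+FN)`
            ((K ≤ Q →
              ((A.filter (fun i => c i = m)).card : ℝ) /
                  ((A.filter (fun i => c i = m)).card
                    + (A.filter (fun i => ¬ c i = m)).card) = 1 ∧
              ((A.filter (fun i => c i = m)).card : ℝ) /
                  ((A.filter (fun i => c i = m)).card
                    + ((Finset.univ.filter (fun i => c i = m)) \ A).card)
                = (K : ℝ) / Nm) ∧
            (Q < K →
              (Q : ℝ) / K ≤ ((A.filter (fun i => c i = m)).card : ℝ) /
                  ((A.filter (fun i => c i = m)).card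
                    + (A.filter (fun i => ¬ c i = m)).card) ∧
              (Q : ℝ) / Nm ≤ ((A.filter (fun i => c i = m)).card : ℝ) /
                  ((A.filter (fun i => c i = m)).card
                    + ((Finset.univ.filter (fun i => c i = m)) \ A).card)))} := by
  classical
  haveI hνmv : IsProbabilityMeasure (ν m v) := hν m v
  -- trivial case: `ηmδ ≤ 0`
  by_cases hη0 : ηmδ ≤ 0
  · have h1 : (1 : ℝ) ≤ (1 - ηmδ) ^ Q := one_le_pow₀ (by linarith)
    have h2 : 0 < Real.exp (-(2 * ((Nm : ℝ) * ηmδ - Q) ^ 2 / Nm)) := Real.exp_pos _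
    have h3 : 0 ≤ 2 * (d : ℝ) * Real.exp (-(Q * ε ^ 2 / (2 * L ^ 2 * δ ^ 2))) := by positivity
    rw [ENNReal.ofReal_eq_zero.mpr (by linarith)]
    exact zero_le
  push_neg at hη0
  -- basic facts about `ηmδ`
  have hbddFin : BddBelow (Set.range fun w : Fin 2 =>
      ⨅ x : S m w, ((ν m w) (ball (x : H w) δ)).toReal) := (Set.finite_range _).bddBelow
  have hinner_bdd : ∀ w : Fin 2, BddBelow (Set.range fun x : S m w =>
      ((ν m w) (ball (x : H w) δ)).toReal) := by
    intro w
    exact ⟨0, by rintro r ⟨x, rfl⟩; exact ENNReal.toReal_nonneg⟩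
  have hball : ∀ y ∈ S m v, ηmδ ≤ ((ν m v) (ball y δ)).toReal := by
    intro y hy
    rw [hηmδ]
    exact le_trans (ciInf_le hbddFin v) (ciInf_le (hinner_bdd v) ⟨y, hy⟩)
  have hSne : (S m v).Nonempty := by
    by_contra hS
    rw [Set.not_nonempty_iff_eq_empty] at hS
    have h0 : ηmδ ≤ 0 := by
      rw [hηmδ]
      refine le_trans (ciInf_le hbddFin v) ?_
      haveI : IsEmpty (S m v) := by rw [hS]; exact Set.isEmpty_coe_sort.mpr rfl
      rw [Real.iInf_of_isEmpty]
    linarith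
  obtain ⟨y₀, hy₀⟩ := hSne
  have htoReal_le_one : ∀ s : Set (H v), ((ν m v) s).toReal ≤ 1 := by
    intro s
    have h := prob_le_one (μ := ν m v) (s := s)
    calc ((ν m v) s).toReal ≤ (1 : ℝ≥0∞).toReal := ENNReal.toReal_mono (by norm_num) h
      _ = 1 := by simp
  have hηle1 : ηmδ ≤ 1 := le_trans (hball y₀ hy₀) (htoReal_le_one _)
  have hQR : (Q : ℝ) < (Nm : ℝ) * ηmδ := by
    rw [div_lt_iff₀ hη0] at hNQ
    linarith
  have hQN : Q < Nm := by
    have h1 : (Nm : ℝ) * ηmδ ≤ (Nm : ℝ) := by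
      nlinarith [show (0:ℝ) ≤ (Nm:ℝ) from Nat.cast_nonneg Nm]
    exact_mod_cast lt_of_lt_of_le hQR h1
  have hNm0 : 0 < Nm := by omega
  -- the subtype of class-`m` training samples
  have hcardκ : Fintype.card {i : ι // c i = m} = Nm := by
    rw [Fintype.card_subtype]
    exact hNm
  have hΩne : Nonempty Ω := by
    by_contra h
    rw [not_nonempty_iff] at h
    have h1 : P Set.univ = 1 := measure_univ
    rw [Set.univ_eq_empty_iff.mpr h] at h1
    simp at h1
  obtain ⟨ω₀⟩ := hΩne
  have hκne : Nonempty {i : ι // c i = m} := by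
    rw [← Fintype.card_pos_iff, hcardκ]
    omega
  obtain ⟨i₀⟩ := hκne
  have hη_nn : 0 ≤ η := le_trans (norm_nonneg _) (hP1 ω₀ i₀.1)
  have hRδ_nn : 0 ≤ Rδ := by
    refine le_trans (norm_nonneg _) (hP2 ω₀ v i₀.1 i₀.1 rfl ?_)
    rw [sub_self, norm_zero]
    positivity
  -- the margin gap (whenever a training sample of another class exists)
  have hgap : (∃ j : ι, ¬ c j = m) → η + L * (3 * δ) < γ - L * (3 * δ) := by
    rintro ⟨j, hj⟩
    rcases Nat.eq_zero_or_pos d with hd | hd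
    · exfalso
      subst hd
      have h3 := hP3 ω₀ i₀.1 j (by rw [i₀.2]; exact fun h => hj h.symm)
      have he : f v (X v i₀.1 ω₀) = f u (X u j ω₀) := Subsingleton.elim _ _
      rw [he, sub_self, norm_zero] at h3
      have hs : Real.sqrt ((0 : ℕ) : ℝ) = 0 := by simp
      rw [hs] at hmargin
      nlinarith [mul_pos hL hδ]
    · have hd1 : (1 : ℝ) ≤ Real.sqrt d := by
        rw [show (1 : ℝ) = Real.sqrt 1 from (Real.sqrt_one).symm]
        exact Real.sqrt_le_sqrt (by exact_mod_cast hd)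
      nlinarith [mul_pos hL hδ, mul_le_mul_of_nonneg_right hd1 hε.le]
  -- a finite net of `S m v`
  have hgood_card : ∀ D : Finset (H v), ↑D ⊆ S m v →
      (∀ y ∈ D, ∀ z ∈ D, y ≠ z → 2 * δ ≤ dist y z) → (D.card : ℝ) * ηmδ ≤ 1 := by
    intro D hDS hDsep
    have hdisj : (↑D : Set (H v)).PairwiseDisjoint (fun y => ball y δ) := by
      intro y hy z hz hyz
      refine Set.disjoint_left.mpr ?_
      intro w hw hw'
      have h1 := hDsep y hy z hz hyz
      have h2 := dist_triangle y w z
      rw [mem_ball, dist_comm] at hw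
      rw [mem_ball, dist_comm] at hw'
      rw [dist_comm w z] at h2
      linarith
    have hsum : ∑ y ∈ D, (ν m v) (ball y δ) ≤ 1 := by
      rw [← measure_biUnion_finset hdisj (fun y _ => measurableSet_ball)]
      exact prob_le_one
    have hlow : (D.card : ℝ≥0∞) * ENNReal.ofReal ηmδ ≤ ∑ y ∈ D, (ν m v) (ball y δ) := by
      rw [← nsmul_eq_mul]
      refine Finset.card_nsmul_le_sum D _ _ ?_
      intro y hy
      have h1 := hball y (hDS hy)
      calc ENNReal.ofReal ηmδ ≤ ENNReal.ofReal (((ν m v) (ball y δ)).toReal) :=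
            ENNReal.ofReal_le_ofReal h1
        _ = (ν m v) (ball y δ) := ENNReal.ofReal_toReal (measure_ne_top _ _)
    have h2 : ENNReal.ofReal ((D.card : ℝ) * ηmδ) ≤ 1 := by
      rw [ENNReal.ofReal_mul (by positivity), ENNReal.ofReal_natCast]
      exact le_trans hlow hsum
    exact ENNReal.ofReal_le_one.mp h2
  have hnet : ∃ D : Finset (H v), ↑D ⊆ S m v ∧
      (∀ y ∈ S m v, ∃ z ∈ D, dist y z < 2 * δ) := by
    set pred : ℕ → Prop := fun n => ∃ D : Finset (H v), ↑D ⊆ S m v ∧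
      (∀ y ∈ D, ∀ z ∈ D, y ≠ z → 2 * δ ≤ dist y z) ∧ D.card = n with hpreddef
    set B : ℕ := Nat.ceil (1 / ηmδ) with hBdef
    have hbound : ∀ n, pred n → n ≤ B := by
      rintro n ⟨D, hDS, hDsep, hDcard⟩
      have h1 := hgood_card D hDS hDsep
      rw [hDcard] at h1
      have h2 : (n : ℝ) ≤ 1 / ηmδ := by
        rw [le_div_iff₀ hη0]
        exact h1
      have h3 : (n : ℝ) ≤ (B : ℝ) := le_trans h2 (Nat.le_ceil _)
      exact_mod_cast h3
    have hpred0 : pred 0 := ⟨∅, by simp, by simp, rfl⟩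
    have hN := Nat.findGreatest_spec (Nat.zero_le B) hpred0
    obtain ⟨D, hDS, hDsep, hDcard⟩ := hN
    refine ⟨D, hDS, ?_⟩
    intro y hy
    by_contra hcon
    push_neg at hcon
    have hyD : y ∉ D := by
      intro hyD
      have := hcon y hyD
      rw [dist_self] at this
      linarith
    have hgood' : pred (Nat.findGreatest pred B + 1) := by
      refine ⟨insert y D, ?_, ?_, ?_⟩
      · rw [Finset.coe_insert]
        exact Set.insert_subset hy hDS
      · intro a ha b hb hab
        rw [Finset.mem_insert] at ha hb
        rcases ha with rfl | ha
        · rcases hb with rfl | hb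
          · exact absurd rfl hab
          · exact hcon b hb
        · rcases hb with rfl | hb
          · rw [dist_comm]; exact hcon a ha
          · exact hDsep a ha b hb hab
      · rw [Finset.card_insert_of_notMem hyD, hDcard]
    exact Nat.findGreatest_is_greatest (Nat.lt_succ_self _) (hbound _ hgood') hgood'
  obtain ⟨D, hDS, hDnet⟩ := hnet
  -- the joint law of the class-`m` training samples and the query, in modality `v`
  set κ' := {i : ι // c i = m} with hκ'
  set vecX : Ω → (κ' → H v) := fun ω i => X v i.1 ω with hvec
  have hvecMeas : Measurable vecX := measurable_pi_lambda _ (fun i => hXmeas v i.1)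
  set πκ : Measure (κ' → H v) := Measure.pi (fun _ : κ' => ν m v) with hπκ
  haveI : IsProbabilityMeasure πκ := by rw [hπκ]; infer_instance
  have hvecLaw : Measure.map vecX P = πκ := by
    rw [hπκ]
    refine (Measure.pi_eq ?_).symm
    intro sets hsets
    rw [Measure.map_apply hvecMeas (MeasurableSet.univ_pi hsets)]
    set e : κ' → Fin 2 × Option ι := fun i => (v, some i.1) with he
    have heinj : Function.Injective e := by
      intro a b hab
      rw [he] at hab
      simp only [Prod.mk.injEq, Option.some.injEq] at hab
      exact Subtype.ext hab.2
    set sets' : Fin 2 × Option ι → Set Ω := fun q =>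
      if q.1 = v then
        (match q.2 with
          | none => Set.univ
          | some i => if h : c i = m then X v i ⁻¹' (sets ⟨i, h⟩) else Set.univ)
      else Set.univ with hsets'
    have hkey : ∀ i : κ', sets' (e i) = X v i.1 ⁻¹' (sets i) := by
      intro i
      rw [hsets', he]
      simp only [if_pos rfl]
      exact dif_pos i.2
    have hpre : vecX ⁻¹' (Set.univ.pi sets) = ⋂ q ∈ Finset.univ.image e, sets' q := by
      ext ω'
      simp only [Set.mem_preimage, Set.mem_pi, Set.mem_univ, true_imp_iff, Set.mem_iInter,
        Finset.mem_image, Finset.mem_univ, true_and]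
      constructor
      · rintro h q ⟨i, rfl⟩
        rw [hkey i]
        exact h i
      · intro h i
        have := h (e i) ⟨i, rfl⟩
        rwa [hkey i] at this
    have hcom : ∀ q ∈ Finset.univ.image e,
        MeasurableSet[((fun p : Fin 2 × Option ι =>
            (inferInstance : MeasurableSpace (H p.1))) q).comap
          ((fun p : Fin 2 × Option ι => p.2.elim (x p.1) (fun i => X p.1 i)) q)]
          (sets' q) := by
      intro q hq
      obtain ⟨i, _, rfl⟩ := Finset.mem_image.mp hq
      rw [hkey i]
      exact ⟨sets i, hsets i, rfl⟩
    rw [hpre, hindep.meas_biInter hcom,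
      Finset.prod_image (fun a _ b _ hab => heinj hab)]
    refine Finset.prod_congr rfl ?_
    intro i _
    rw [hkey i]
    have h1 : Measure.map (X v i.1) P (sets i) = P (X v i.1 ⁻¹' sets i) :=
      Measure.map_apply (hXmeas v i.1) (hsets i)
    rw [← h1, hXdist v i.1, i.2]
  have hIndep2 : IndepFun vecX (x v) P := by
    set SS : Finset (Fin 2 × Option ι) :=
      (Finset.univ : Finset κ').image (fun i : κ' => ((v, some i.1) : Fin 2 × Option ι)) with hSS
    set TT : Finset (Fin 2 × Option ι) := {(v, (none : Option ι))} with hTT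
    have hdisj : Disjoint SS TT := by
      rw [Finset.disjoint_right]
      intro q hq
      rw [hTT, Finset.mem_singleton] at hq
      subst hq
      rw [hSS]
      simp
    have hmeasAll : ∀ p : Fin 2 × Option ι,
        Measurable (p.2.elim (x p.1) (fun i => X p.1 i)) := by
      rintro ⟨w, (_ | i)⟩
      · exact hxmeas w
      · exact hXmeas w i
    have h := hindep.indepFun_finset SS TT hdisj hmeasAll
    have hmemS : ∀ i : κ', ((v, some i.1) : Fin 2 × Option ι) ∈ SS := by
      intro i
      rw [hSS]
      exact Finset.mem_image.mpr ⟨i, Finset.mem_univ _, rfl⟩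
    have hmemT : ((v, (none : Option ι)) : Fin 2 × Option ι) ∈ TT := by
      rw [hTT]; exact Finset.mem_singleton_self _
    have hg1 : Measurable (fun h : (∀ q : ↥SS, H (q.1).1) =>
        (fun i : κ' => h ⟨(v, some i.1), hmemS i⟩ : κ' → H v)) :=
      measurable_pi_lambda _ (fun i => measurable_pi_apply _)
    have hg2 : Measurable (fun h : (∀ q : ↥TT, H (q.1).1) =>
        (h ⟨(v, none), hmemT⟩ : H v)) := measurable_pi_apply _
    exact h.comp hg1 hg2
  set Φ : Ω → (κ' → H v) × H v := fun ω => (vecX ω, x v ω) with hΦ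
  have hΦmeas : Measurable Φ := hvecMeas.prodMk (hxmeas v)
  have hjoint : Measure.map Φ P = πκ.prod (ν m v) := by
    refine (Measure.prod_eq ?_).symm
    intro s t hs ht
    rw [Measure.map_apply hΦmeas (hs.prod ht)]
    have hpre : Φ ⁻¹' (s ×ˢ t) = vecX ⁻¹' s ∩ (x v) ⁻¹' t := rfl
    rw [hpre, (indepFun_iff_measure_inter_preimage_eq_mul.mp hIndep2) s t hs ht,
      ← Measure.map_apply hvecMeas hs, ← Measure.map_apply (hxmeas v) ht, hvecLaw, hxdist v]
  -- the good event, as a preimage of a measurable set in the product space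
  set G : H v → Set (κ' → H v) := fun z =>
    {zv : κ' → H v | Q ≤ (Finset.univ.filter (fun i : κ' => zv i ∈ ball z δ)).card} with hG
  have hGmeas : ∀ z : H v, MeasurableSet (G z) := by
    intro z
    have hm : Measurable (fun zv : κ' → H v =>
        (Finset.univ.filter (fun i : κ' => zv i ∈ ball z δ)).card) := by
      have h1 : (fun zv : κ' → H v =>
          (Finset.univ.filter (fun i : κ' => zv i ∈ ball z δ)).card)
          = fun zv => ∑ i : κ', if zv i ∈ ball z δ then 1 else 0 := by
        funext zv
        rw [Finset.card_filter]
      rw [h1]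
      exact Finset.measurable_sum _ (fun i _ =>
        Measurable.ite (measurableSet_ball.preimage (measurable_pi_apply i))
          measurable_const measurable_const)
    exact hm measurableSet_Ici
  set Bprod : Set ((κ' → H v) × H v) := ⋃ z ∈ D, (G z) ×ˢ (ball z (2 * δ)) with hBprod
  have hBmeas : MeasurableSet Bprod := by
    rw [hBprod]
    exact D.measurableSet_biUnion (fun z _ => (hGmeas z).prod measurableSet_ball)
  -- probability bound
  have hcompl : πκ.prod (ν m v) Bprodᶜ
      ≤ ENNReal.ofReal (Real.exp (-(2 * ((Nm : ℝ) * ηmδ - Q) ^ 2 / Nm))) := by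
    rw [Measure.prod_apply_symm hBmeas.compl]
    have hae : ∀ᵐ y ∂(ν m v), y ∈ S m v := by
      rw [Filter.eventually_iff]
      exact mem_ae_iff.mpr (by simpa using hSsupp m v)
    have hbnd : ∀ y ∈ S m v, πκ ((fun zv => (zv, y)) ⁻¹' Bprodᶜ)
        ≤ ENNReal.ofReal (Real.exp (-(2 * ((Nm : ℝ) * ηmδ - Q) ^ 2 / Nm))) := by
      intro y hy
      obtain ⟨z₀, hz₀D, hyz₀⟩ := hDnet y hy
      have hsub : (fun zv => (zv, y)) ⁻¹' Bprodᶜ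
          ⊆ {zv : κ' → H v |
              ∑ i : κ', (ball z₀ δ).indicator (fun _ => (1 : ℝ)) (zv i) ≤ (Q : ℝ)} := by
        intro zv hzv
        simp only [Set.mem_preimage, Set.mem_compl_iff] at hzv
        have hcard : ¬ Q ≤ (Finset.univ.filter (fun i : κ' => zv i ∈ ball z₀ δ)).card := by
          intro hc
          refine hzv ?_
          rw [hBprod]
          refine Set.mem_biUnion hz₀D ?_
          exact Set.mem_prod.mpr ⟨hc, by rwa [mem_ball]⟩
        have hsum : ∑ i : κ', (ball z₀ δ).indicator (fun _ => (1 : ℝ)) (zv i)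
            = ((Finset.univ.filter (fun i : κ' => zv i ∈ ball z₀ δ)).card : ℝ) := by
          rw [Finset.card_filter]
          push_cast
          refine Finset.sum_congr rfl ?_
          intro i _
          by_cases h : zv i ∈ ball z₀ δ <;> simp [h]
        rw [Set.mem_setOf_eq, hsum]
        have := not_le.mp hcard
        exact_mod_cast le_of_lt this
      refine le_trans (measure_mono hsub) ?_
      have happ := crb_hoeffding_pi (ν m v) (Metric.ball z₀ δ) measurableSet_ball
        (hball z₀ (hDS hz₀D)) (q := (Q : ℝ)) (by rw [hcardκ]; exact hQR)
      rwa [hcardκ] at happ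
    calc ∫⁻ y, πκ ((fun zv => (zv, y)) ⁻¹' Bprodᶜ) ∂(ν m v)
        ≤ ∫⁻ _y, ENNReal.ofReal (Real.exp (-(2 * ((Nm : ℝ) * ηmδ - Q) ^ 2 / Nm))) ∂(ν m v) :=
          lintegral_mono_ae (hae.mono fun y hy => hbnd y hy)
      _ = ENNReal.ofReal (Real.exp (-(2 * ((Nm : ℝ) * ηmδ - Q) ^ 2 / Nm))) := by
          rw [lintegral_const, measure_univ, mul_one]
  
  -- measure of the good event
  have hPB : (1 : ℝ≥0∞) - ENNReal.ofReal (Real.exp (-(2 * ((Nm : ℝ) * ηmδ - Q) ^ 2 / Nm)))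
      ≤ P (Φ ⁻¹' Bprod) := by
    have h1 : P (Φ ⁻¹' Bprod) = πκ.prod (ν m v) Bprod := by
      rw [← Measure.map_apply hΦmeas hBmeas, hjoint]
    have h2 : πκ.prod (ν m v) Bprod = 1 - πκ.prod (ν m v) Bprodᶜ := by
      haveI : IsProbabilityMeasure (πκ.prod (ν m v)) := by infer_instance
      rw [prob_compl_eq_one_sub hBmeas, ENNReal.sub_sub_cancel ENNReal.one_ne_top prob_le_one]
    rw [h1, h2]
    exact tsub_le_tsub_left hcompl 1
  -- the deterministic part: on the good event, retrieval succeeds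
  have hincl : Φ ⁻¹' Bprod ⊆ {ω | ∀ A : Finset ι, A.card = K →
            (∀ i ∈ A, ∀ j ∉ A,
              ‖f u (X u i ω) - f v (x v ω)‖ ≤ ‖f u (X u j ω) - f v (x v ω)‖) →
            ((K ≤ Q →
              ((A.filter (fun i => c i = m)).card : ℝ) /
                  ((A.filter (fun i => c i = m)).card
                    + (A.filter (fun i => ¬ c i = m)).card) = 1 ∧
              ((A.filter (fun i => c i = m)).card : ℝ) /
                  ((A.filter (fun i => c i = m)).card
                    + ((Finset.univ.filter (fun i => c i = m)) \ A).card)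
                = (K : ℝ) / Nm) ∧
            (Q < K →
              (Q : ℝ) / K ≤ ((A.filter (fun i => c i = m)).card : ℝ) /
                  ((A.filter (fun i => c i = m)).card
                    + (A.filter (fun i => ¬ c i = m)).card) ∧
              (Q : ℝ) / Nm ≤ ((A.filter (fun i => c i = m)).card : ℝ) /
                  ((A.filter (fun i => c i = m)).card
                    + ((Finset.univ.filter (fun i => c i = m)) \ A).card)))} := by
    intro ω hω
    simp only [Set.mem_setOf_eq]
    intro A hAcard hAnear
    have hω' : Φ ω ∈ Bprod := hω
    rw [hBprod] at hω'
    obtain ⟨z₀, hz₀D, hmem⟩ := Set.mem_iUnion₂.mp hω'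
    obtain ⟨hvG, hxball⟩ := Set.mem_prod.mp hmem
    have hcardge : Q ≤ (Finset.univ.filter (fun i : κ' => X v i.1 ω ∈ ball z₀ δ)).card := hvG
    obtain ⟨T₀, hT₀sub, hT₀card⟩ := Finset.exists_subset_card_eq hcardge
    have hT₀d : ∀ i ∈ T₀, dist (X v i.1 ω) (x v ω) < 3 * δ := by
      intro i hi
      have h1 : X v i.1 ω ∈ ball z₀ δ := (Finset.mem_filter.mp (hT₀sub hi)).2
      rw [mem_ball] at h1
      have h2 : dist (x v ω) z₀ < 2 * δ := by rw [← mem_ball]; exact hxball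
      calc dist (X v i.1 ω) (x v ω) ≤ dist (X v i.1 ω) z₀ + dist z₀ (x v ω) :=
            dist_triangle _ _ _
        _ < 3 * δ := by rw [dist_comm z₀]; linarith
    have hT₀ne : T₀.Nonempty := Finset.card_pos.mp (by omega)
    obtain ⟨t₀, ht₀⟩ := hT₀ne
    have hLdist : ∀ i ∈ T₀, ‖f v (X v i.1 ω) - f v (x v ω)‖ ≤ L * (3 * δ) := by
      intro i hi
      refine le_trans (hLip v _ _) ?_
      have h1 : ‖X v i.1 ω - x v ω‖ < 3 * δ := by
        rw [← dist_eq_norm]; exact hT₀d i hi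
      nlinarith
    have hnear : ∀ i ∈ T₀, ‖f u (X u i.1 ω) - f v (x v ω)‖ ≤ η + L * (3 * δ) := by
      intro i hi
      have htri := dist_triangle (f u (X u i.1 ω)) (f v (X v i.1 ω)) (f v (x v ω))
      rw [dist_eq_norm, dist_eq_norm, dist_eq_norm] at htri
      have h2 : ‖f u (X u i.1 ω) - f v (X v i.1 ω)‖ ≤ η := by
        rw [norm_sub_rev]; exact hP1 ω i.1
      linarith [hLdist i hi]
    have hfar : ∀ j, ¬ c j = m → γ - L * (3 * δ) < ‖f u (X u j ω) - f v (x v ω)‖ := by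
      intro j hj
      have h1 := hP3 ω t₀.1 j (by rw [t₀.2]; exact fun h => hj h.symm)
      have htri := dist_triangle (f v (X v t₀.1 ω)) (f v (x v ω)) (f u (X u j ω))
      rw [dist_eq_norm, dist_eq_norm, dist_eq_norm] at htri
      have h4 : ‖f v (x v ω) - f u (X u j ω)‖ = ‖f u (X u j ω) - f v (x v ω)‖ :=
        norm_sub_rev _ _
      have h5 := hLdist t₀ ht₀
      rw [h4] at htri
      linarith
    set T : Finset ι := T₀.image Subtype.val with hTdef
    have hTcard : T.card = Q := by
      rw [hTdef, Finset.card_image_of_injective _ Subtype.val_injective, hT₀card]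
    have hTm : ∀ i ∈ T, c i = m := by
      intro i hi
      rw [hTdef] at hi
      obtain ⟨j, _, rfl⟩ := Finset.mem_image.mp hi
      exact j.2
    have hTnear : ∀ i ∈ T, ‖f u (X u i ω) - f v (x v ω)‖ ≤ η + L * (3 * δ) := by
      intro i hi
      rw [hTdef] at hi
      obtain ⟨j, hj, rfl⟩ := Finset.mem_image.mp hi
      exact hnear j hj
    have hdich : (∀ j ∈ A, c j = m) ∨ T ⊆ A := by
      by_cases hTA : T ⊆ A
      · exact Or.inr hTA
      · left
        obtain ⟨s₁, hs₁T, hs₁A⟩ := Finset.not_subset.mp hTA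
        intro j hjA
        by_contra hjm
        have h1 := hAnear j hjA s₁ hs₁A
        have h2 := hTnear s₁ hs₁T
        have h3 := hfar j hjm
        have h4 := hgap ⟨j, hjm⟩
        linarith
    have habK : (A.filter (fun i => c i = m)).card
        + (A.filter (fun i => ¬ c i = m)).card = K := by
      rw [Finset.card_filter_add_card_filter_not, hAcard]
    have hK0 : (0 : ℝ) < (K : ℝ) := by exact_mod_cast (by omega : 0 < K)
    have hNm0' : (0 : ℝ) < (Nm : ℝ) := by exact_mod_cast hNm0
    constructor
    · intro hKQ
      have hpure : ∀ j ∈ A, c j = m := by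
        rcases hdich with h | hTA
        · exact h
        · have hTA' : T = A := Finset.eq_of_subset_of_card_le hTA
            (by rw [hTcard, hAcard]; exact hKQ)
          intro j hj
          exact hTm j (hTA' ▸ hj)
      have hfA : A.filter (fun i => c i = m) = A := Finset.filter_true_of_mem hpure
      have hAM : A ⊆ Finset.univ.filter (fun i => c i = m) := by
        intro i hi
        exact Finset.mem_filter.mpr ⟨Finset.mem_univ _, hpure i hi⟩
      have hb0 : A.filter (fun i => ¬ c i = m) = ∅ := by
        refine Finset.filter_false_of_mem ?_
        intro i hi
        simpa using hpure i hi
      have hKNm : K ≤ Nm := by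
        rw [← hAcard, ← hNm]
        exact Finset.card_le_card hAM
      have hsd : ((Finset.univ.filter (fun i => c i = m)) \ A).card = Nm - K := by
        rw [Finset.card_sdiff_of_subset hAM, hNm, hAcard]
      constructor
      · rw [hfA, hb0, hAcard]
        simp only [Finset.card_empty, Nat.cast_zero, add_zero]
        rw [div_self hK0.ne']
      · rw [hfA, hsd, hAcard, Nat.cast_sub hKNm]
        have hden : (K : ℝ) + ((Nm : ℝ) - K) = (Nm : ℝ) := by ring
        rw [hden]
    · intro hQK
      have haQ : Q ≤ (A.filter (fun i => c i = m)).card := by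
        rcases hdich with h | hTA
        · have hfA : A.filter (fun i => c i = m) = A := Finset.filter_true_of_mem h
          rw [hfA, hAcard]
          omega
        · refine le_trans (le_of_eq hTcard.symm) (Finset.card_le_card ?_)
          intro i hi
          exact Finset.mem_filter.mpr ⟨hTA hi, hTm i hi⟩
      have haNm : (A.filter (fun i => c i = m)).card ≤ Nm := by
        rw [← hNm]
        refine Finset.card_le_card ?_
        intro i hi
        exact Finset.mem_filter.mpr ⟨Finset.mem_univ _, (Finset.mem_filter.mp hi).2⟩
      have hsd2 : ((Finset.univ.filter (fun i => c i = m)) \ A).card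
          = Nm - (A.filter (fun i => c i = m)).card := by
        have h1 := Finset.card_sdiff_add_card_inter
          (Finset.univ.filter (fun i => c i = m)) A
        have h2 : (Finset.univ.filter (fun i => c i = m)) ∩ A
            = A.filter (fun i => c i = m) := by
          ext i
          simp only [Finset.mem_inter, Finset.mem_filter, Finset.mem_univ, true_and]
          tauto
        rw [h2, hNm] at h1
        omega
      constructor
      · have hKsum : ((A.filter (fun i => c i = m)).card : ℝ)
            + ((A.filter (fun i => ¬ c i = m)).card : ℝ) = (K : ℝ) := by exact_mod_cast habK
        rw [hKsum]
        gcongr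

      · rw [hsd2, Nat.cast_sub haNm]
        have hden : ((A.filter (fun i => c i = m)).card : ℝ)
            + ((Nm : ℝ) - (A.filter (fun i => c i = m)).card) = (Nm : ℝ) := by ring
        rw [hden]
        gcongr
  -- conclusion
  refine le_trans ?_ (measure_mono hincl)
  refine le_trans ?_ hPB
  set r1 := Real.exp (-(2 * ((Nm : ℝ) * ηmδ - Q) ^ 2 / Nm)) with hr1
  by_cases hpos : 1 - r1 - 2 * d * Real.exp (-(Q * ε ^ 2 / (2 * L ^ 2 * δ ^ 2)))
      - (1 - ηmδ) ^ Q ≤ 0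
  · rw [ENNReal.ofReal_eq_zero.mpr hpos]
    exact zero_le
  · push_neg at hpos
    have h2 : 0 ≤ 2 * (d : ℝ) * Real.exp (-(Q * ε ^ 2 / (2 * L ^ 2 * δ ^ 2))) := by positivity
    have h3 : 0 ≤ (1 - ηmδ) ^ Q := pow_nonneg (by linarith) Q
    have h4 : (1 - r1 - 2 * d * Real.exp (-(Q * ε ^ 2 / (2 * L ^ 2 * δ ^ 2)))
        - (1 - ηmδ) ^ Q) + r1 ≤ 1 := by linarith
    have h5 : ENNReal.ofReal (1 - r1 - 2 * d * Real.exp (-(Q * ε ^ 2 / (2 * L ^ 2 * δ ^ 2)))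
        - (1 - ηmδ) ^ Q) + ENNReal.ofReal r1 ≤ 1 := by
      rw [← ENNReal.ofReal_add hpos.le (Real.exp_pos _).le]
      calc ENNReal.ofReal _ ≤ ENNReal.ofReal 1 := ENNReal.ofReal_le_ofReal h4
        _ = 1 := ENNReal.ofReal_one
    exact ENNReal.le_sub_of_add_le_right ENNReal.ofReal_ne_top h5
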